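/- The kinetic energy functional 𝓕_kin[b] = ∫σ p[b] dx, where p[b] is the solution of the nonlocal Poisson equation with kernel b, is convex on the convex set of symmetric L^2 kernels bounded below by r > 0: for b_0, b_1 in this set and t ∈ [0,1], 𝓕_kin[(1−t)b_0 + t b_1] ≤ (1−t)𝓕_kin[b_0] + t 𝓕_kin[b_1]. -/

import Mathlib

open MeasureTheory Set Filter
open Topology

noncomputable def μI : Measure ℝ := volume.restrict (Set.Icc 0 1)
noncomputable def μsq : Measure (ℝ × ℝ) := μI.prod μI

instance : IsProbabilityMeasure μI := by
  constructor
  rw [μI, Measure.restrict_apply_univ, Real.volume_Icc]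
  norm_num

instance : IsProbabilityMeasure μsq := by
  unfold μsq; infer_instance

lemma mp_fst : MeasurePreserving Prod.fst μsq μI :=
  ⟨measurable_fst, by rw [μsq, Measure.map_fst_prod]; simp⟩

lemma mp_snd : MeasurePreserving Prod.snd μsq μI :=
  ⟨measurable_snd, by rw [μsq, Measure.map_snd_prod]; simp⟩

noncomputable def trc (n : ℕ) (s : ℝ) : ℝ := max (-(n : ℝ)) (min (n : ℝ) s)

lemma trc_continuous (n : ℕ) : Continuous (trc n) :=
  continuous_const.max (continuous_const.min continuous_id)

lemma trc_mono (n : ℕ) : Monotone (trc n) := fun _ _ h =>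
  max_le_max le_rfl (min_le_min le_rfl h)

lemma abs_trc_le_n (n : ℕ) (s : ℝ) : |trc n s| ≤ n := by
  rw [abs_le]
  exact ⟨le_max_left _ _, max_le (neg_le_self (Nat.cast_nonneg n)) (min_le_left _ _)⟩

lemma abs_trc_le (n : ℕ) (s : ℝ) : |trc n s| ≤ |s| := by
  rw [abs_le]
  constructor
  · refine le_max_of_le_right (le_min ?_ (neg_abs_le s))
    have : (0:ℝ) ≤ (n:ℝ) := Nat.cast_nonneg n
    linarith [abs_nonneg s]
  · refine max_le ?_ ((min_le_right _ _).trans (le_abs_self s))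
    have : (0:ℝ) ≤ (n:ℝ) := Nat.cast_nonneg n
    linarith [abs_nonneg s]

lemma trc_sub_le (n : ℕ) {a b : ℝ} (h : a ≤ b) : trc n b - trc n a ≤ b - a := by
  unfold trc
  rcases le_total ((n:ℝ)) a with h1 | h1 <;> rcases le_total ((n:ℝ)) b with h2 | h2 <;>
    rcases le_total (-(n:ℝ)) (min (n:ℝ) a) with h3 | h3 <;>
    rcases le_total (-(n:ℝ)) (min (n:ℝ) b) with h4 | h4 <;>
    simp only [max_def, min_def] at * <;> split_ifs at * <;> linarith

lemma trc_lip (n : ℕ) (a b : ℝ) : |trc n a - trc n b| ≤ |a - b| := by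
  rw [abs_sub_le_iff]
  rcases le_total a b with h | h
  · have h1 := trc_mono n h
    have h2 := trc_sub_le n h
    constructor
    · linarith [abs_nonneg (a - b)]
    · calc trc n b - trc n a ≤ b - a := h2
        _ ≤ |a - b| := by rw [abs_sub_comm]; exact le_abs_self _
  · have h1 := trc_mono n h
    have h2 := trc_sub_le n h
    constructor
    · calc trc n a - trc n b ≤ a - b := h2
        _ ≤ |a - b| := le_abs_self _
    · linarith [abs_nonneg (a - b)]

lemma trc_eq (n : ℕ) (s : ℝ) (h : |s| ≤ n) : trc n s = s := by
  rw [trc, min_eq_right ((le_abs_self s).trans h),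
    max_eq_right (by linarith [neg_abs_le s, neg_le_neg h])]

lemma trc_tendsto (s : ℝ) : Tendsto (fun n : ℕ => trc n s) atTop (𝓝 s) := by
  refine tendsto_const_nhds.congr' ?_
  filter_upwards [eventually_ge_atTop ⌈|s|⌉₊] with n hn
  exact (trc_eq n s ((Nat.le_ceil _).trans (Nat.cast_le.2 hn))).symm

lemma trc_prod_nonneg (n : ℕ) (a b : ℝ) : 0 ≤ (a - b) * (trc n a - trc n b) := by
  rcases le_total a b with h | h
  · have := trc_mono n h
    nlinarith
  · have := trc_mono n h
    exact mul_nonneg (by linarith) (by linarith)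

lemma integrable_mul_L2 {α : Type*} [MeasurableSpace α] {μ : Measure α} {f g : α → ℝ}
    (hf : MemLp f 2 μ) (hg : MemLp g 2 μ) : Integrable (fun x => f x * g x) μ := by
  have h : MemLp (f • g) 1 μ :=
    haveI : ENNReal.HolderTriple 2 2 1 := ⟨by rw [inv_one]; exact ENNReal.inv_two_add_inv_two⟩
    hg.smul hf
  exact memLp_one_iff_integrable.mp h
lemma sol_trunc (σ : ℝ → ℝ) (hσ : MemLp σ 2 μI) (hσ0 : ∫ x, σ x ∂μI = 0)
    (w : ℝ × ℝ → ℝ) (b : ℝ × ℝ → ℝ) (p : ℝ → ℝ)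
    (hsol : ∀ φ : ℝ → ℝ, MemLp φ ⊤ μI → (∫ x, φ x ∂μI) = 0 →
      (1 / 2) * ∫ q, b q * (p q.1 - p q.2) * (φ q.1 - φ q.2) * w q ∂μsq
        = ∫ x, σ x * φ x ∂μI)
    (z : ℝ → ℝ) (hz : MemLp z 2 μI) (n : ℕ) :
    (1 / 2) * ∫ q, b q * (p q.1 - p q.2) * (trc n (z q.1) - trc n (z q.2)) * w q ∂μsq
      = ∫ x, σ x * trc n (z x) ∂μI := by
  have htrcm : AEStronglyMeasurable (fun x => trc n (z x)) μI :=
    (trc_continuous n).comp_aestronglyMeasurable hz.1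
  have hbd : ∀ᵐ x ∂μI, ‖trc n (z x)‖ ≤ (n : ℝ) :=
    Eventually.of_forall fun x => by
      simpa [Real.norm_eq_abs] using abs_trc_le_n n (z x)
  have htrcTop : MemLp (fun x => trc n (z x)) ⊤ μI := memLp_top_of_bound htrcm _ hbd
  have htrcInt : Integrable (fun x => trc n (z x)) μI := htrcTop.integrable le_top
  set c := ∫ x, trc n (z x) ∂μI with hc
  have hφTop : MemLp (fun x => trc n (z x) - c) ⊤ μI := htrcTop.sub (memLp_const c)
  have hφ0 : ∫ x, (trc n (z x) - c) ∂μI = 0 := by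
    rw [integral_sub htrcInt (integrable_const c), integral_const]
    simp
    rw [hc]; exact sub_self _
  have key := hsol (fun x => trc n (z x) - c) hφTop hφ0
  rw [show (fun q : ℝ × ℝ => b q * (p q.1 - p q.2) *
        ((trc n (z q.1) - c) - (trc n (z q.2) - c)) * w q)
      = fun q : ℝ × ℝ => b q * (p q.1 - p q.2) * (trc n (z q.1) - trc n (z q.2)) * w q
      from funext fun q => by ring] at key
  rw [key]
  have hσInt : Integrable σ μI := hσ.integrable one_le_two
  have h1 : Integrable (fun x => σ x * trc n (z x)) μI := by
    have h := hσInt.bdd_mul htrcm hbd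
    exact h.congr (Eventually.of_forall fun x => mul_comm _ _)
  rw [show (fun x => σ x * (trc n (z x) - c)) = fun x => σ x * trc n (z x) - σ x * c
      from funext fun x => by ring,
    integral_sub h1 (hσInt.mul_const c), integral_mul_const, hσ0, zero_mul, sub_zero]

lemma tendsto_sigma (σ : ℝ → ℝ) (hσ : MemLp σ 2 μI) (z : ℝ → ℝ) (hz : MemLp z 2 μI) :
    Tendsto (fun n : ℕ => ∫ x, σ x * trc n (z x) ∂μI) atTop (𝓝 (∫ x, σ x * z x ∂μI)) := by
  refine tendsto_integral_of_dominated_convergence (fun x => ‖σ x‖ * ‖z x‖) ?_ ?_ ?_ ?_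
  · intro n
    exact hσ.1.mul ((trc_continuous n).comp_aestronglyMeasurable hz.1)
  · exact integrable_mul_L2 hσ.norm hz.norm
  · intro n
    refine Eventually.of_forall fun x => ?_
    rw [norm_mul]
    refine mul_le_mul_of_nonneg_left ?_ (norm_nonneg _)
    simpa [Real.norm_eq_abs] using abs_trc_le n (z x)
  · refine Eventually.of_forall fun x => ?_
    exact tendsto_const_nhds.mul (trc_tendsto (z x))
lemma cross_lemma (r : ℝ) (hr : 0 < r)
    (σ : ℝ → ℝ) (hσ : MemLp σ 2 μI) (hσ0 : ∫ x, σ x ∂μI = 0)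
    (w : ℝ × ℝ → ℝ) (hwm : Measurable w) (hw0 : ∀ z, 0 ≤ w z)
    (b : ℝ × ℝ → ℝ) (hb : MemLp b 2 μsq) (hbr : ∀ᵐ q ∂μsq, r ≤ b q)
    (p : ℝ → ℝ) (hp : MemLp p 2 μI)
    (hsol : ∀ φ : ℝ → ℝ, MemLp φ ⊤ μI → (∫ x, φ x ∂μI) = 0 →
      (1 / 2) * ∫ q, b q * (p q.1 - p q.2) * (φ q.1 - φ q.2) * w q ∂μsq
        = ∫ x, σ x * φ x ∂μI)
    (z : ℝ → ℝ) (hz : MemLp z 2 μI)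
    (hGp : Integrable (fun q => b q * (p q.1 - p q.2) ^ 2 * w q) μsq)
    (hGz : Integrable (fun q => b q * (z q.1 - z q.2) ^ 2 * w q) μsq) :
    Integrable (fun q => b q * (p q.1 - p q.2) * (z q.1 - z q.2) * w q) μsq ∧
    (1 / 2) * ∫ q, b q * (p q.1 - p q.2) * (z q.1 - z q.2) * w q ∂μsq
      = ∫ x, σ x * z x ∂μI := by
  have hb0 : ∀ᵐ q ∂μsq, 0 ≤ b q := by
    filter_upwards [hbr] with q hq; linarith
  have hpf : AEStronglyMeasurable (fun q : ℝ × ℝ => p q.1) μsq :=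
    (hp.comp_measurePreserving mp_fst).1
  have hps : AEStronglyMeasurable (fun q : ℝ × ℝ => p q.2) μsq :=
    (hp.comp_measurePreserving mp_snd).1
  have hzf : AEStronglyMeasurable (fun q : ℝ × ℝ => z q.1) μsq :=
    (hz.comp_measurePreserving mp_fst).1
  have hzs : AEStronglyMeasurable (fun q : ℝ × ℝ => z q.2) μsq :=
    (hz.comp_measurePreserving mp_snd).1
  have hDp : AEStronglyMeasurable (fun q : ℝ × ℝ => p q.1 - p q.2) μsq := hpf.sub hps
  have hDz : AEStronglyMeasurable (fun q : ℝ × ℝ => z q.1 - z q.2) μsq := hzf.sub hzs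
  have hwam : AEStronglyMeasurable w μsq := hwm.aestronglyMeasurable
  set bound : ℝ × ℝ → ℝ := fun q =>
    (1 / 2) * (b q * (p q.1 - p q.2) ^ 2 * w q + b q * (z q.1 - z q.2) ^ 2 * w q)
    with hbound_def
  have hbound_int : Integrable bound μsq := (hGp.add hGz).const_mul _
  -- pointwise bound valid for any real d with |d| ≤ |z q.1 - z q.2|
  have hkey : ∀ q : ℝ × ℝ, 0 ≤ b q → ∀ d : ℝ, |d| ≤ |z q.1 - z q.2| →
      ‖b q * (p q.1 - p q.2) * d * w q‖ ≤ bound q := by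
    intro q hbq d hd
    have hw := hw0 q
    rw [hbound_def, Real.norm_eq_abs, abs_mul, abs_mul, abs_mul,
      abs_of_nonneg hbq, abs_of_nonneg hw]
    have h1 : |p q.1 - p q.2| ^ 2 = (p q.1 - p q.2) ^ 2 := sq_abs _
    have h2 : |z q.1 - z q.2| ^ 2 = (z q.1 - z q.2) ^ 2 := sq_abs _
    nlinarith [mul_nonneg hbq hw, abs_nonneg (p q.1 - p q.2), abs_nonneg d,
      abs_nonneg (z q.1 - z q.2), sq_nonneg (|p q.1 - p q.2| - |z q.1 - z q.2|),
      mul_nonneg (mul_nonneg hbq hw) (abs_nonneg (p q.1 - p q.2)),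
      mul_nonneg (mul_nonneg (mul_nonneg hbq hw) (abs_nonneg (p q.1 - p q.2)))
        (sub_nonneg.2 hd)]
  have hFmeas : AEStronglyMeasurable
      (fun q => b q * (p q.1 - p q.2) * (z q.1 - z q.2) * w q) μsq :=
    ((hb.1.mul hDp).mul hDz).mul hwam
  have hFbound : ∀ᵐ q ∂μsq,
      ‖b q * (p q.1 - p q.2) * (z q.1 - z q.2) * w q‖ ≤ bound q := by
    filter_upwards [hb0] with q hbq
    exact hkey q hbq _ le_rfl
  have hFint : Integrable (fun q => b q * (p q.1 - p q.2) * (z q.1 - z q.2) * w q) μsq :=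
    Integrable.mono' hbound_int hFmeas hFbound
  refine ⟨hFint, ?_⟩
  have hDCT : Tendsto
      (fun n : ℕ => ∫ q, b q * (p q.1 - p q.2) * (trc n (z q.1) - trc n (z q.2)) * w q ∂μsq)
      atTop (𝓝 (∫ q, b q * (p q.1 - p q.2) * (z q.1 - z q.2) * w q ∂μsq)) := by
    refine tendsto_integral_of_dominated_convergence bound ?_ hbound_int ?_ ?_
    · intro n
      exact ((hb.1.mul hDp).mul
        (((trc_continuous n).comp_aestronglyMeasurable hzf).sub
          ((trc_continuous n).comp_aestronglyMeasurable hzs))).mul hwam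
    · intro n
      filter_upwards [hb0] with q hbq
      exact hkey q hbq _ (trc_lip n _ _)
    · refine Eventually.of_forall fun q => ?_
      exact (tendsto_const_nhds.mul
        ((trc_tendsto (z q.1)).sub (trc_tendsto (z q.2)))).mul tendsto_const_nhds
  have hOther : Tendsto
      (fun n : ℕ => ∫ q, b q * (p q.1 - p q.2) * (trc n (z q.1) - trc n (z q.2)) * w q ∂μsq)
      atTop (𝓝 (2 * ∫ x, σ x * z x ∂μI)) := by
    have heq : ∀ n : ℕ,
        ∫ q, b q * (p q.1 - p q.2) * (trc n (z q.1) - trc n (z q.2)) * w q ∂μsq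
          = 2 * ∫ x, σ x * trc n (z x) ∂μI := by
      intro n
      have := sol_trunc σ hσ hσ0 w b p hsol z hz n
      linarith
    rw [show (fun n : ℕ =>
        ∫ q, b q * (p q.1 - p q.2) * (trc n (z q.1) - trc n (z q.2)) * w q ∂μsq)
      = fun n : ℕ => 2 * ∫ x, σ x * trc n (z x) ∂μI from funext heq]
    exact (tendsto_sigma σ hσ z hz).const_mul 2
  have := tendsto_nhds_unique hDCT hOther
  linarith
lemma energy_lemma (r : ℝ) (hr : 0 < r)
    (σ : ℝ → ℝ) (hσ : MemLp σ 2 μI) (hσ0 : ∫ x, σ x ∂μI = 0)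
    (w : ℝ × ℝ → ℝ) (hwm : Measurable w) (hw0 : ∀ z, 0 ≤ w z) (hwb : MemLp w ⊤ μsq)
    (b : ℝ × ℝ → ℝ) (hb : MemLp b 2 μsq) (hbr : ∀ᵐ q ∂μsq, r ≤ b q)
    (p : ℝ → ℝ) (hp : MemLp p 2 μI)
    (hsol : ∀ φ : ℝ → ℝ, MemLp φ ⊤ μI → (∫ x, φ x ∂μI) = 0 →
      (1 / 2) * ∫ q, b q * (p q.1 - p q.2) * (φ q.1 - φ q.2) * w q ∂μsq
        = ∫ x, σ x * φ x ∂μI) :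
    Integrable (fun q => b q * (p q.1 - p q.2) ^ 2 * w q) μsq ∧
    (1 / 2) * ∫ q, b q * (p q.1 - p q.2) ^ 2 * w q ∂μsq = ∫ x, σ x * p x ∂μI := by
  have hb0 : ∀ᵐ q ∂μsq, 0 ≤ b q := by
    filter_upwards [hbr] with q hq; linarith
  have hpf : MemLp (fun q : ℝ × ℝ => p q.1) 2 μsq := hp.comp_measurePreserving mp_fst
  have hps : MemLp (fun q : ℝ × ℝ => p q.2) 2 μsq := hp.comp_measurePreserving mp_snd
  have hDp : MemLp (fun q : ℝ × ℝ => p q.1 - p q.2) 2 μsq := hpf.sub hps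
  have hwam : AEStronglyMeasurable w μsq := hwm.aestronglyMeasurable
  -- a.e. bound for w
  have hwfin : eLpNormEssSup w μsq ≠ ⊤ := by
    have h := hwb.2
    rw [eLpNorm_exponent_top] at h
    exact h.ne
  set Cw : ℝ := (eLpNormEssSup w μsq).toReal with hCw_def
  have hCw : ∀ᵐ q ∂μsq, ‖w q‖ ≤ Cw := by
    filter_upwards [ae_le_eLpNormEssSup (f := w) (μ := μsq)] with q hq
    have h2 := ENNReal.toReal_mono hwfin hq
    simpa using h2
  -- truncated integrand
  set g : ℕ → ℝ × ℝ → ℝ := fun n q =>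
    b q * (p q.1 - p q.2) * (trc n (p q.1) - trc n (p q.2)) * w q with hg_def
  have hgmeas : ∀ n, AEStronglyMeasurable (g n) μsq := fun n =>
    ((hb.1.mul hDp.1).mul
      (((trc_continuous n).comp_aestronglyMeasurable hpf.1).sub
        ((trc_continuous n).comp_aestronglyMeasurable hps.1))).mul hwam
  have hgnonneg : ∀ n, ∀ᵐ q ∂μsq, 0 ≤ g n q := by
    intro n
    filter_upwards [hb0] with q hbq
    have h2 := trc_prod_nonneg n (p q.1) (p q.2)
    have hw := hw0 q
    have hex : g n q = b q * ((p q.1 - p q.2) * (trc n (p q.1) - trc n (p q.2))) * w q := by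
      simp only [hg_def]; ring
    rw [hex]
    exact mul_nonneg (mul_nonneg hbq h2) hw
  have hbDp : Integrable (fun q => b q * (p q.1 - p q.2)) μsq := integrable_mul_L2 hb hDp
  have hgint : ∀ n, Integrable (g n) μsq := by
    intro n
    have h : Integrable (fun q => (trc n (p q.1) - trc n (p q.2)) * w q *
        (b q * (p q.1 - p q.2))) μsq := by
      refine hbDp.bdd_mul (c := 2 * n * Cw)
        ((((trc_continuous n).comp_aestronglyMeasurable hpf.1).sub
          ((trc_continuous n).comp_aestronglyMeasurable hps.1)).mul hwam) ?_
      filter_upwards [hCw] with q hq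
      rw [norm_mul]
      have h1 : ‖trc n (p q.1) - trc n (p q.2)‖ ≤ 2 * n := by
        rw [Real.norm_eq_abs]
        calc |trc n (p q.1) - trc n (p q.2)| ≤ |trc n (p q.1)| + |trc n (p q.2)| :=
          abs_sub _ _
        _ ≤ 2 * n := by linarith [abs_trc_le_n n (p q.1), abs_trc_le_n n (p q.2)]
      exact mul_le_mul h1 hq (norm_nonneg _) (by positivity)
    refine h.congr (Eventually.of_forall fun q => ?_)
    simp only [hg_def]; ring
  have hgsol : ∀ n, ∫ q, g n q ∂μsq = 2 * ∫ x, σ x * trc n (p x) ∂μI := by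
    intro n
    have h := sol_trunc σ hσ hσ0 w b p hsol p hp n
    simp only [hg_def]
    linarith
  have htend : Tendsto (fun n => ∫ q, g n q ∂μsq) atTop (𝓝 (2 * ∫ x, σ x * p x ∂μI)) := by
    rw [show (fun n => ∫ q, g n q ∂μsq) = fun n => 2 * ∫ x, σ x * trc n (p x) ∂μI
      from funext hgsol]
    exact (tendsto_sigma σ hσ p hp).const_mul 2
  -- Fatou: integrability of the limit
  set G : ℝ × ℝ → ℝ := fun q => b q * (p q.1 - p q.2) ^ 2 * w q with hG_def
  have hGmeas : AEStronglyMeasurable G μsq :=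
    ((hb.1.mul ((continuous_pow 2).comp_aestronglyMeasurable hDp.1))).mul hwam
  have hGnonneg : ∀ᵐ q ∂μsq, 0 ≤ G q := by
    filter_upwards [hb0] with q hbq
    exact mul_nonneg (mul_nonneg hbq (sq_nonneg _)) (hw0 q)
  have hglim : ∀ᵐ q ∂μsq, Tendsto (fun n => g n q) atTop (𝓝 (G q)) := by
    refine Eventually.of_forall fun q => ?_
    have h : Tendsto (fun n => g n q) atTop
        (𝓝 (b q * (p q.1 - p q.2) * (p q.1 - p q.2) * w q)) :=
      (tendsto_const_nhds.mul
        ((trc_tendsto (p q.1)).sub (trc_tendsto (p q.2)))).mul tendsto_const_nhds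
    have hex : b q * (p q.1 - p q.2) * (p q.1 - p q.2) * w q = G q := by
      simp only [hG_def]; ring
    rwa [hex] at h
  have hGint : Integrable G μsq := by
    refine ⟨hGmeas, ?_⟩
    rw [hasFiniteIntegral_iff_norm]
    have hmeas' : ∀ n, AEMeasurable (fun q => ENNReal.ofReal (g n q)) μsq := fun n =>
      ENNReal.measurable_ofReal.comp_aemeasurable (hgmeas n).aemeasurable
    have hstep1 : (∫⁻ q, ENNReal.ofReal ‖G q‖ ∂μsq)
        = ∫⁻ q, ENNReal.ofReal (G q) ∂μsq := by
      refine lintegral_congr_ae ?_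
      filter_upwards [hGnonneg] with q hq
      rw [Real.norm_eq_abs, abs_of_nonneg hq]
    have hstep2 : (∫⁻ q, ENNReal.ofReal (G q) ∂μsq)
        = ∫⁻ q, liminf (fun n => ENNReal.ofReal (g n q)) atTop ∂μsq := by
      refine lintegral_congr_ae ?_
      filter_upwards [hglim] with q hq
      exact ((ENNReal.continuous_ofReal.tendsto _).comp hq).liminf_eq.symm
    have hstep3 : (∫⁻ q, liminf (fun n => ENNReal.ofReal (g n q)) atTop ∂μsq)
        ≤ liminf (fun n => ∫⁻ q, ENNReal.ofReal (g n q) ∂μsq) atTop :=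
      lintegral_liminf_le' hmeas'
    have hstep4 : ∀ n, (∫⁻ q, ENNReal.ofReal (g n q) ∂μsq)
        = ENNReal.ofReal (∫ q, g n q ∂μsq) := fun n =>
      (ofReal_integral_eq_lintegral_ofReal (hgint n) (hgnonneg n)).symm
    have hstep5 : liminf (fun n => ∫⁻ q, ENNReal.ofReal (g n q) ∂μsq) atTop
        = ENNReal.ofReal (2 * ∫ x, σ x * p x ∂μI) := by
      rw [show (fun n => ∫⁻ q, ENNReal.ofReal (g n q) ∂μsq)
        = fun n => ENNReal.ofReal (∫ q, g n q ∂μsq) from funext hstep4]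
      exact ((ENNReal.continuous_ofReal.tendsto _).comp htend).liminf_eq
    calc (∫⁻ q, ENNReal.ofReal ‖G q‖ ∂μsq)
        ≤ ENNReal.ofReal (2 * ∫ x, σ x * p x ∂μI) := by
          rw [hstep1, hstep2]; rw [hstep5] at hstep3; exact hstep3
      _ < ⊤ := ENNReal.ofReal_lt_top
  refine ⟨hGint, ?_⟩
  have hsq : (fun q => b q * (p q.1 - p q.2) * (p q.1 - p q.2) * w q) = G :=
    funext fun q => by simp only [hG_def]; ring
  have hGint' : Integrable (fun q => b q * (p q.1 - p q.2) * (p q.1 - p q.2) * w q) μsq := by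
    rw [hsq]; exact hGint
  have := (cross_lemma r hr σ hσ hσ0 w hwm hw0 b hb hbr p hp hsol p hp hGint hGint).2
  rw [show (fun q => b q * (p q.1 - p q.2) * (p q.1 - p q.2) * w q) = G from hsq] at this
  exact this

/-- Convexity of the kinetic energy functional `b ↦ 𝓕_kin[b] = ∫ σ p[b]` on the convex set
of symmetric `L²` kernels bounded below by `r > 0`: for kernels `b₀, b₁` with solutions
`p₀, p₁`, and `p_t` the solution for `(1−t)b₀ + t b₁`, one has
`∫ σ p_t ≤ (1−t) ∫ σ p₀ + t ∫ σ p₁`. -/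
theorem kinetic_energy_convex (r lam : ℝ) (hr : 0 < r) (hlam : 0 < lam)
    (σ : ℝ → ℝ) (hσ : MemLp σ 2 μI) (hσ0 : ∫ x, σ x ∂μI = 0)
    (w : ℝ × ℝ → ℝ) (hwm : Measurable w) (hw0 : ∀ z, 0 ≤ w z) (hwb : MemLp w ⊤ μsq)
    (hgap : ∀ z : ℝ → ℝ, MemLp z 2 μI → (∫ x, z x ∂μI) = 0 →
      lam * ∫ x, (z x) ^ 2 ∂μI ≤ ∫ q, (z q.1 - z q.2) ^ 2 * w q ∂μsq)
    (b0 b1 : ℝ × ℝ → ℝ)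
    (hb0 : MemLp b0 2 μsq) (hb0sym : ∀ x y : ℝ, b0 (x, y) = b0 (y, x))
    (hb0r : ∀ᵐ z ∂μsq, r ≤ b0 z)
    (hb1 : MemLp b1 2 μsq) (hb1sym : ∀ x y : ℝ, b1 (x, y) = b1 (y, x))
    (hb1r : ∀ᵐ z ∂μsq, r ≤ b1 z)
    (t : ℝ) (ht0 : 0 ≤ t) (ht1 : t ≤ 1)
    (p0 p1 pt : ℝ → ℝ)
    (hp0 : MemLp p0 2 μI) (hp00 : ∫ x, p0 x ∂μI = 0)
    (hp0sol : ∀ φ : ℝ → ℝ, MemLp φ ⊤ μI → (∫ x, φ x ∂μI) = 0 →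
      (1 / 2) * ∫ q, b0 q * (p0 q.1 - p0 q.2) * (φ q.1 - φ q.2) * w q ∂μsq
        = ∫ x, σ x * φ x ∂μI)
    (hp1 : MemLp p1 2 μI) (hp10 : ∫ x, p1 x ∂μI = 0)
    (hp1sol : ∀ φ : ℝ → ℝ, MemLp φ ⊤ μI → (∫ x, φ x ∂μI) = 0 →
      (1 / 2) * ∫ q, b1 q * (p1 q.1 - p1 q.2) * (φ q.1 - φ q.2) * w q ∂μsq
        = ∫ x, σ x * φ x ∂μI)
    (hpt : MemLp pt 2 μI) (hpt0 : ∫ x, pt x ∂μI = 0)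
    (hptsol : ∀ φ : ℝ → ℝ, MemLp φ ⊤ μI → (∫ x, φ x ∂μI) = 0 →
      (1 / 2) * ∫ q, ((1 - t) * b0 q + t * b1 q) * (pt q.1 - pt q.2) * (φ q.1 - φ q.2)
          * w q ∂μsq
        = ∫ x, σ x * φ x ∂μI) :
    ∫ x, σ x * pt x ∂μI
      ≤ (1 - t) * ∫ x, σ x * p0 x ∂μI + t * ∫ x, σ x * p1 x ∂μI := by
  set bt : ℝ × ℝ → ℝ := fun q => (1 - t) * b0 q + t * b1 q with hbt_def
  have hbtL2 : MemLp bt 2 μsq := (hb0.const_mul (1 - t)).add (hb1.const_mul t)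
  have hbtr : ∀ᵐ q ∂μsq, r ≤ bt q := by
    filter_upwards [hb0r, hb1r] with q h0 h1
    simp only [hbt_def]
    nlinarith [mul_le_mul_of_nonneg_left h0 (by linarith : (0:ℝ) ≤ 1 - t),
      mul_le_mul_of_nonneg_left h1 ht0]
  obtain ⟨hGt_int, hGt_id⟩ :=
    energy_lemma r hr σ hσ hσ0 w hwm hw0 hwb bt hbtL2 hbtr pt hpt hptsol
  obtain ⟨hG0_int, hG0_id⟩ :=
    energy_lemma r hr σ hσ hσ0 w hwm hw0 hwb b0 hb0 hb0r p0 hp0 hp0sol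
  obtain ⟨hG1_int, hG1_id⟩ :=
    energy_lemma r hr σ hσ hσ0 w hwm hw0 hwb b1 hb1 hb1r p1 hp1 hp1sol
  have hptf : MemLp (fun q : ℝ × ℝ => pt q.1) 2 μsq := hpt.comp_measurePreserving mp_fst
  have hpts : MemLp (fun q : ℝ × ℝ => pt q.2) 2 μsq := hpt.comp_measurePreserving mp_snd
  have hDpt : AEStronglyMeasurable (fun q : ℝ × ℝ => (pt q.1 - pt q.2) ^ 2) μsq :=
    (continuous_pow 2).comp_aestronglyMeasurable (hptf.1.sub hpts.1)
  have hwam : AEStronglyMeasurable w μsq := hwm.aestronglyMeasurable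
  set T0 : ℝ × ℝ → ℝ := fun q => (1 - t) * (b0 q * (pt q.1 - pt q.2) ^ 2 * w q) with hT0
  set T1 : ℝ × ℝ → ℝ := fun q => t * (b1 q * (pt q.1 - pt q.2) ^ 2 * w q) with hT1
  have hT0m : AEStronglyMeasurable T0 μsq := ((hb0.1.mul hDpt).mul hwam).const_mul _
  have hT1m : AEStronglyMeasurable T1 μsq := ((hb1.1.mul hDpt).mul hwam).const_mul _
  have hsplit : ∀ q, bt q * (pt q.1 - pt q.2) ^ 2 * w q = T0 q + T1 q := by
    intro q; simp only [hbt_def, hT0, hT1]; ring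
  have hT0nn : ∀ᵐ q ∂μsq, 0 ≤ T0 q := by
    filter_upwards [hb0r] with q h0
    simp only [hT0]
    exact mul_nonneg (by linarith)
      (mul_nonneg (mul_nonneg (le_trans hr.le h0) (sq_nonneg _)) (hw0 q))
  have hT1nn : ∀ᵐ q ∂μsq, 0 ≤ T1 q := by
    filter_upwards [hb1r] with q h1
    simp only [hT1]
    exact mul_nonneg ht0
      (mul_nonneg (mul_nonneg (le_trans hr.le h1) (sq_nonneg _)) (hw0 q))
  have hT0int : Integrable T0 μsq := by
    refine Integrable.mono' hGt_int hT0m ?_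
    filter_upwards [hT0nn, hT1nn] with q h0 h1
    rw [Real.norm_eq_abs, abs_of_nonneg h0, hsplit q]
    linarith
  have hT1int : Integrable T1 μsq := by
    refine Integrable.mono' hGt_int hT1m ?_
    filter_upwards [hT0nn, hT1nn] with q h0 h1
    rw [Real.norm_eq_abs, abs_of_nonneg h1, hsplit q]
    linarith
  have hsum : ∫ q, T0 q ∂μsq + ∫ q, T1 q ∂μsq
      = ∫ q, bt q * (pt q.1 - pt q.2) ^ 2 * w q ∂μsq := by
    rw [show (fun q => bt q * (pt q.1 - pt q.2) ^ 2 * w q) = fun q => T0 q + T1 q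
      from funext hsplit, integral_add hT0int hT1int]
  have claim0 : 2 * ((1 - t) * ∫ x, σ x * pt x ∂μI) - (1 / 2) * ∫ q, T0 q ∂μsq
      ≤ (1 - t) * ∫ x, σ x * p0 x ∂μI := by
    rcases eq_or_lt_of_le ht1 with h | h
    · have hz : (1 : ℝ) - t = 0 := by rw [h]; ring
      have hT0z : T0 = fun _ => (0 : ℝ) := funext fun q => by simp only [hT0, hz]; ring
      rw [hT0z, hz]
      simp
    · have hc : 0 < 1 - t := by linarith
      have hQ0int : Integrable (fun q => b0 q * (pt q.1 - pt q.2) ^ 2 * w q) μsq := by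
        have h2 := hT0int.const_mul ((1 - t)⁻¹)
        refine h2.congr (Eventually.of_forall fun q => ?_)
        simp only [hT0]
        field_simp
      obtain ⟨hcint, hcid⟩ := cross_lemma r hr σ hσ hσ0 w hwm hw0 b0 hb0 hb0r p0 hp0
        hp0sol pt hpt hG0_int hQ0int
      have hexp : 0 ≤ ∫ q,
          b0 q * ((pt q.1 - pt q.2) - (p0 q.1 - p0 q.2)) ^ 2 * w q ∂μsq := by
        refine integral_nonneg_of_ae ?_
        filter_upwards [hb0r] with q h0
        exact mul_nonneg (mul_nonneg (le_trans hr.le h0) (sq_nonneg _)) (hw0 q)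
      have hsplit2 : (fun q => b0 q * ((pt q.1 - pt q.2) - (p0 q.1 - p0 q.2)) ^ 2 * w q)
          = fun q => (b0 q * (pt q.1 - pt q.2) ^ 2 * w q
              - 2 * (b0 q * (p0 q.1 - p0 q.2) * (pt q.1 - pt q.2) * w q))
              + b0 q * (p0 q.1 - p0 q.2) ^ 2 * w q := funext fun q => by ring
      have hBint : Integrable
          (fun q => 2 * (b0 q * (p0 q.1 - p0 q.2) * (pt q.1 - pt q.2) * w q)) μsq :=
        hcint.const_mul 2
      have hABint : Integrable (fun q => b0 q * (pt q.1 - pt q.2) ^ 2 * w q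
          - 2 * (b0 q * (p0 q.1 - p0 q.2) * (pt q.1 - pt q.2) * w q)) μsq :=
        hQ0int.sub hBint
      have e1 : ∫ q, ((b0 q * (pt q.1 - pt q.2) ^ 2 * w q
            - 2 * (b0 q * (p0 q.1 - p0 q.2) * (pt q.1 - pt q.2) * w q))
            + b0 q * (p0 q.1 - p0 q.2) ^ 2 * w q) ∂μsq
          = (∫ q, (b0 q * (pt q.1 - pt q.2) ^ 2 * w q
            - 2 * (b0 q * (p0 q.1 - p0 q.2) * (pt q.1 - pt q.2) * w q)) ∂μsq)
            + ∫ q, b0 q * (p0 q.1 - p0 q.2) ^ 2 * w q ∂μsq :=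
        integral_add hABint hG0_int
      have e2 : ∫ q, (b0 q * (pt q.1 - pt q.2) ^ 2 * w q
            - 2 * (b0 q * (p0 q.1 - p0 q.2) * (pt q.1 - pt q.2) * w q)) ∂μsq
          = (∫ q, b0 q * (pt q.1 - pt q.2) ^ 2 * w q ∂μsq)
            - ∫ q, 2 * (b0 q * (p0 q.1 - p0 q.2) * (pt q.1 - pt q.2) * w q) ∂μsq :=
        integral_sub hQ0int hBint
      have e3 : ∫ q, 2 * (b0 q * (p0 q.1 - p0 q.2) * (pt q.1 - pt q.2) * w q) ∂μsq
          = 2 * ∫ q, b0 q * (p0 q.1 - p0 q.2) * (pt q.1 - pt q.2) * w q ∂μsq :=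
        integral_const_mul 2 _
      rw [hsplit2, e1, e2, e3] at hexp
      have hTQ : ∫ q, T0 q ∂μsq
          = (1 - t) * ∫ q, b0 q * (pt q.1 - pt q.2) ^ 2 * w q ∂μsq := by
        simp only [hT0]
        rw [integral_const_mul]
      have hX : 2 * (∫ x, σ x * pt x ∂μI)
          - (1 / 2) * (∫ q, b0 q * (pt q.1 - pt q.2) ^ 2 * w q ∂μsq)
          - (∫ x, σ x * p0 x ∂μI) ≤ 0 := by linarith
      have h5 := mul_le_mul_of_nonneg_left hX hc.le
      rw [mul_zero] at h5
      rw [hTQ]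
      linarith [h5]
  have claim1 : 2 * (t * ∫ x, σ x * pt x ∂μI) - (1 / 2) * ∫ q, T1 q ∂μsq
      ≤ t * ∫ x, σ x * p1 x ∂μI := by
    rcases eq_or_lt_of_le ht0 with h | h
    · have hT1z : T1 = fun _ => (0 : ℝ) := funext fun q => by simp only [hT1, ← h]; ring
      rw [hT1z, ← h]
      simp
    · have hQ1int : Integrable (fun q => b1 q * (pt q.1 - pt q.2) ^ 2 * w q) μsq := by
        have h2 := hT1int.const_mul (t⁻¹)
        refine h2.congr (Eventually.of_forall fun q => ?_)
        simp only [hT1]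
        field_simp
      obtain ⟨hcint, hcid⟩ := cross_lemma r hr σ hσ hσ0 w hwm hw0 b1 hb1 hb1r p1 hp1
        hp1sol pt hpt hG1_int hQ1int
      have hexp : 0 ≤ ∫ q,
          b1 q * ((pt q.1 - pt q.2) - (p1 q.1 - p1 q.2)) ^ 2 * w q ∂μsq := by
        refine integral_nonneg_of_ae ?_
        filter_upwards [hb1r] with q h1
        exact mul_nonneg (mul_nonneg (le_trans hr.le h1) (sq_nonneg _)) (hw0 q)
      have hsplit2 : (fun q => b1 q * ((pt q.1 - pt q.2) - (p1 q.1 - p1 q.2)) ^ 2 * w q)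
          = fun q => (b1 q * (pt q.1 - pt q.2) ^ 2 * w q
              - 2 * (b1 q * (p1 q.1 - p1 q.2) * (pt q.1 - pt q.2) * w q))
              + b1 q * (p1 q.1 - p1 q.2) ^ 2 * w q := funext fun q => by ring
      have hBint : Integrable
          (fun q => 2 * (b1 q * (p1 q.1 - p1 q.2) * (pt q.1 - pt q.2) * w q)) μsq :=
        hcint.const_mul 2
      have hABint : Integrable (fun q => b1 q * (pt q.1 - pt q.2) ^ 2 * w q
          - 2 * (b1 q * (p1 q.1 - p1 q.2) * (pt q.1 - pt q.2) * w q)) μsq :=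
        hQ1int.sub hBint
      have e1 : ∫ q, ((b1 q * (pt q.1 - pt q.2) ^ 2 * w q
            - 2 * (b1 q * (p1 q.1 - p1 q.2) * (pt q.1 - pt q.2) * w q))
            + b1 q * (p1 q.1 - p1 q.2) ^ 2 * w q) ∂μsq
          = (∫ q, (b1 q * (pt q.1 - pt q.2) ^ 2 * w q
            - 2 * (b1 q * (p1 q.1 - p1 q.2) * (pt q.1 - pt q.2) * w q)) ∂μsq)
            + ∫ q, b1 q * (p1 q.1 - p1 q.2) ^ 2 * w q ∂μsq :=
        integral_add hABint hG1_int
      have e2 : ∫ q, (b1 q * (pt q.1 - pt q.2) ^ 2 * w q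
            - 2 * (b1 q * (p1 q.1 - p1 q.2) * (pt q.1 - pt q.2) * w q)) ∂μsq
          = (∫ q, b1 q * (pt q.1 - pt q.2) ^ 2 * w q ∂μsq)
            - ∫ q, 2 * (b1 q * (p1 q.1 - p1 q.2) * (pt q.1 - pt q.2) * w q) ∂μsq :=
        integral_sub hQ1int hBint
      have e3 : ∫ q, 2 * (b1 q * (p1 q.1 - p1 q.2) * (pt q.1 - pt q.2) * w q) ∂μsq
          = 2 * ∫ q, b1 q * (p1 q.1 - p1 q.2) * (pt q.1 - pt q.2) * w q ∂μsq :=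
        integral_const_mul 2 _
      rw [hsplit2, e1, e2, e3] at hexp
      have hTQ : ∫ q, T1 q ∂μsq
          = t * ∫ q, b1 q * (pt q.1 - pt q.2) ^ 2 * w q ∂μsq := by
        simp only [hT1]
        rw [integral_const_mul]
      have hX : 2 * (∫ x, σ x * pt x ∂μI)
          - (1 / 2) * (∫ q, b1 q * (pt q.1 - pt q.2) ^ 2 * w q ∂μsq)
          - (∫ x, σ x * p1 x ∂μI) ≤ 0 := by linarith
      have h5 := mul_le_mul_of_nonneg_left hX h.le
      rw [mul_zero] at h5
      rw [hTQ]
      linarith [h5]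
  have hfin : (1 / 2) * (∫ q, T0 q ∂μsq + ∫ q, T1 q ∂μsq) = ∫ x, σ x * pt x ∂μI := by
    rw [hsum]; exact hGt_id
  linarith [claim0, claim1, hfin]
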